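/- If a finite set of points x⁽¹⁾,...,x⁽ᴺ⁾ ∈ X with positive weights w₁,...,w_N forms a cubature rule exact on polynomials of degree ≤ deg(f) + 2r for the measure μ, then ub(f,X,μ)_r ≥ min_i f(x⁽ⁱ⁾) ≥ f_min. -/

import Mathlib

open MvPolynomial MeasureTheory

/-- Lasserre's upper bound of level `r` for minimizing `f` over `X` w.r.t. `μ`. -/
noncomputable def lasserreUB {n : ℕ} (f : MvPolynomial (Fin n) ℝ) (X : Set (Fin n → ℝ))
    (μ : Measure (Fin n → ℝ)) (r : ℕ) : ℝ :=
  sInf {v : ℝ | ∃ σ : MvPolynomial (Fin n) ℝ, IsSumSq σ ∧ σ.totalDegree ≤ 2 * r ∧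
    (∫ x in X, eval x σ ∂μ) = 1 ∧ v = ∫ x in X, eval x f * eval x σ ∂μ}

lemma eval_nonneg_of_isSumSq {n : ℕ} {p : MvPolynomial (Fin n) ℝ} (h : IsSumSq p)
    (x : Fin n → ℝ) : 0 ≤ eval x p := by
  induction h with
  | zero => simp
  | sq_add a _ ih =>
    simp only [map_add, map_mul]
    exact add_nonneg (mul_self_nonneg _) ih

/-- If points `x⁽¹⁾, ..., x⁽ᴺ⁾ ∈ X` with positive weights `w₁, ..., w_N` form a cubature
rule for `(X, μ)` exact on polynomials of degree at most `deg(f) + 2r`, then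
`ub(f,X,μ)_r ≥ minᵢ f(x⁽ⁱ⁾) ≥ f_min`. -/
theorem lasserreUB_cubature (n N r : ℕ) (hN : N ≠ 0) (f : MvPolynomial (Fin n) ℝ)
    (X : Set (Fin n → ℝ)) (hX : IsCompact X) (hne : X.Nonempty)
    (μ : Measure (Fin n → ℝ)) [IsFiniteMeasure μ]
    (pts : Fin N → (Fin n → ℝ)) (w : Fin N → ℝ)
    (hpts : ∀ i, pts i ∈ X) (hw : ∀ i, 0 < w i)
    (hcub : ∀ p : MvPolynomial (Fin n) ℝ, p.totalDegree ≤ f.totalDegree + 2 * r →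
      (∫ x in X, eval x p ∂μ) = ∑ i, w i * eval (pts i) p) :
    (⨅ i, eval (pts i) f) ≤ lasserreUB f X μ r ∧
      sInf ((fun x => eval x f) '' X) ≤ ⨅ i, eval (pts i) f := by
  have : Nonempty (Fin N) := ⟨⟨0, Nat.pos_of_ne_zero hN⟩⟩
  have hbddrange : BddBelow (Set.range fun i => eval (pts i) f) :=
    (Set.finite_range _).bddBelow
  have hm : ∀ i, (⨅ i, eval (pts i) f) ≤ eval (pts i) f := fun i => ciInf_le hbddrange i
  constructor
  · -- build an element of the feasible set
    have hc1 := hcub 1 (by simp)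
    have hcsum : (∫ x in X, (1:ℝ) ∂μ) = ∑ i, w i := by simpa using hc1
    have hcpos : (0:ℝ) < ∑ i, w i :=
      Finset.sum_pos (fun i _ => hw i) Finset.univ_nonempty
    set c : ℝ := ∑ i, w i with hc
    set s : ℝ := Real.sqrt c⁻¹ with hsdef
    have hs : s * s = c⁻¹ := Real.mul_self_sqrt (by positivity)
    have hσss : IsSumSq ((C s : MvPolynomial (Fin n) ℝ) * C s) := by
      have := IsSumSq.sq_add (C s : MvPolynomial (Fin n) ℝ) IsSumSq.zero
      simpa using this
    have hσdeg : ((C s : MvPolynomial (Fin n) ℝ) * C s).totalDegree ≤ 2 * r := by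
      calc ((C s : MvPolynomial (Fin n) ℝ) * C s).totalDegree
          ≤ (C s : MvPolynomial (Fin n) ℝ).totalDegree + (C s : MvPolynomial (Fin n) ℝ).totalDegree :=
            totalDegree_mul _ _
        _ = 0 := by simp
        _ ≤ 2 * r := Nat.zero_le _
    have hσint : (∫ x in X, eval x ((C s : MvPolynomial (Fin n) ℝ) * C s) ∂μ) = 1 := by
      rw [hcub _ (hσdeg.trans (Nat.le_add_left _ _))]
      simp only [map_mul, eval_C]
      rw [← Finset.sum_mul, hs, mul_inv_cancel₀ hcpos.ne']
    refine le_csInf ⟨_, ⟨_, hσss, hσdeg, hσint, rfl⟩⟩ ?_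
    rintro v ⟨σ, hσ, hdeg, hint, rfl⟩
    have hdegfσ : (f * σ).totalDegree ≤ f.totalDegree + 2 * r :=
      (totalDegree_mul f σ).trans (Nat.add_le_add_left hdeg _)
    have hint' : ∑ i, w i * eval (pts i) σ = 1 := by
      rw [← hcub σ (hdeg.trans (Nat.le_add_left _ _))]; exact hint
    have hkey : ∫ x in X, eval x f * eval x σ ∂μ = ∑ i, w i * (eval (pts i) f * eval (pts i) σ) := by
      have := hcub (f * σ) hdegfσ
      simpa only [map_mul] using this
    rw [hkey]
    calc (⨅ i, eval (pts i) f)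
        = (⨅ i, eval (pts i) f) * ∑ i, w i * eval (pts i) σ := by rw [hint', mul_one]
      _ = ∑ i, (⨅ i, eval (pts i) f) * (w i * eval (pts i) σ) := by rw [Finset.mul_sum]
      _ ≤ ∑ i, w i * (eval (pts i) f * eval (pts i) σ) := by
          apply Finset.sum_le_sum
          intro i _
          have hσi : 0 ≤ eval (pts i) σ := eval_nonneg_of_isSumSq hσ _
          calc (⨅ i, eval (pts i) f) * (w i * eval (pts i) σ)
              ≤ eval (pts i) f * (w i * eval (pts i) σ) :=
                mul_le_mul_of_nonneg_right (hm i) (mul_nonneg (hw i).le hσi)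
            _ = w i * (eval (pts i) f * eval (pts i) σ) := by ring
  · have hcont : Continuous fun x : Fin n → ℝ => eval x f := f.continuous_eval
    have hbdd : BddBelow ((fun x => eval x f) '' X) := (hX.image hcont).bddBelow
    exact le_ciInf fun i => csInf_le hbdd ⟨pts i, hpts i, rfl⟩
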